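/- Counter summation bound: let L₁ ≤ L₂ be positive reals and c > 0, Δ > 0 with L₁ = c²/Δ² and L₂ = 2c²K/Δ² for some K ≥ 1. Define κ(ℓ) = 2√(c²/ℓ) for 1 ≤ ℓ ≤ L₁, κ(ℓ) = 2c²/(Δ·ℓ) for L₁ < ℓ ≤ L₂, and κ(ℓ) = 0 for ℓ > L₂. Then for any positive integer N, ∑_{s=1}^{N} κ(s) ≤ (2c²/Δ)·(3 + log K). -/

import Mathlib

set_option maxHeartbeats 1000000

lemma sum_inv_sqrt_le : ∀ n : ℕ, 1 ≤ n →
    ∑ s ∈ Finset.Icc 1 n, (Real.sqrt s)⁻¹ ≤ 2 * Real.sqrt n - 1 := by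
  intro n hn
  induction n with
  | zero => omega
  | succ n ih =>
    rcases Nat.lt_or_ge 1 (n+1) with h | h
    · have hn1 : 1 ≤ n := by omega
      rw [Finset.sum_Icc_succ_top (by omega)]
      have ha : Real.sqrt n ^ 2 = (n:ℝ) := Real.sq_sqrt (by positivity)
      have hb : Real.sqrt (n+1) ^ 2 = (n:ℝ)+1 := Real.sq_sqrt (by positivity)
      have hb0 : 0 < Real.sqrt (n+1) := Real.sqrt_pos.mpr (by positivity)
      have ha0 : 0 ≤ Real.sqrt n := Real.sqrt_nonneg _
      have key : 1 ≤ (2 * Real.sqrt (n+1) - 2 * Real.sqrt n) * Real.sqrt (n+1) := by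
        nlinarith [sq_nonneg (Real.sqrt n - Real.sqrt (n+1))]
      have h2 : (Real.sqrt (n+1))⁻¹ ≤ 2 * Real.sqrt (n+1) - 2 * Real.sqrt n := by
        rw [inv_eq_one_div, div_le_iff₀ hb0]
        linarith
      have h3 := ih hn1
      have hcast : ((n+1 : ℕ) : ℝ) = (n:ℝ) + 1 := by push_cast; ring
      rw [hcast]
      linarith
    · have hz : n = 0 := by omega
      subst hz
      norm_num [Real.sqrt_one]

lemma sum_inv_le_log (m : ℕ) (hm : 1 ≤ m) : ∀ n : ℕ, m ≤ n →
    ∑ s ∈ Finset.Ioc m n, ((s:ℝ))⁻¹ ≤ Real.log n - Real.log m := by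
  intro n
  induction n with
  | zero => intro h; omega
  | succ n ih =>
    intro h
    rcases Nat.lt_or_ge m (n+1) with h1 | h1
    · have hmn : m ≤ n := by omega
      rw [Finset.sum_Ioc_succ_top hmn]
      have hn0 : (0:ℝ) < n := by
        have : 1 ≤ n := le_trans hm hmn
        exact_mod_cast Nat.lt_of_lt_of_le Nat.zero_lt_one this
      have hlog : ((n:ℝ)+1)⁻¹ ≤ Real.log ((n:ℝ)+1) - Real.log n := by
        have h2 := Real.log_le_sub_one_of_pos (x := (n:ℝ)/((n:ℝ)+1)) (by positivity)
        rw [Real.log_div (ne_of_gt hn0) (by positivity)] at h2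
        have he : (n:ℝ)/((n:ℝ)+1) - 1 = -(((n:ℝ)+1)⁻¹) := by field_simp; ring
        linarith
      have h3 := ih hmn
      have hcast : ((n+1 : ℕ) : ℝ) = (n:ℝ) + 1 := by push_cast; ring
      rw [hcast]
      linarith
    · have : m = n + 1 := by omega
      subst this
      simp

theorem counter_summation_bound (c Δ K L₁ L₂ : ℝ)
    (hc : 0 < c) (hΔ : 0 < Δ) (hK : 1 ≤ K)
    (hL1 : L₁ = c ^ 2 / Δ ^ 2) (hL2 : L₂ = 2 * c ^ 2 * K / Δ ^ 2)
    (κ : ℕ → ℝ)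
    (hκ : ∀ ℓ : ℕ, 1 ≤ ℓ →
      κ ℓ = if (ℓ : ℝ) ≤ L₁ then 2 * Real.sqrt (c ^ 2 / (ℓ : ℝ))
            else if (ℓ : ℝ) ≤ L₂ then 2 * c ^ 2 / (Δ * (ℓ : ℝ))
            else 0)
    (N : ℕ) (hN : 0 < N) :
    ∑ s ∈ Finset.Icc 1 N, κ s ≤ (2 * c ^ 2 / Δ) * (3 + Real.log K) := by
  have hK0 : (0:ℝ) < K := lt_of_lt_of_le one_pos hK
  have hL1pos : 0 < L₁ := by rw [hL1]; positivity
  have hL2pos : 0 < L₂ := by rw [hL2]; positivity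
  have hL12 : L₁ ≤ L₂ := by
    rw [hL1, hL2]
    apply div_le_div_of_nonneg_right ?_ (by positivity)
    · nlinarith
  set P : ℝ := 2 * c ^ 2 / Δ with hP
  have hPpos : 0 < P := by rw [hP]; positivity
  have hlogK : 0 ≤ Real.log K := Real.log_nonneg hK
  have hlog2 : Real.log 2 ≤ 1 := by
    have := Real.log_le_sub_one_of_pos (by norm_num : (0:ℝ) < 2); linarith
  have hL2eq : L₂ = 2 * K * L₁ := by rw [hL1, hL2]; ring
  have hlogL2 : Real.log L₂ = Real.log 2 + Real.log K + Real.log L₁ := by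
    rw [hL2eq, Real.log_mul (by positivity) (ne_of_gt hL1pos),
        Real.log_mul (by norm_num) (ne_of_gt hK0)]
  set n₂ := Nat.floor L₂ with hn2
  set M := min N n₂ with hMdef
  have hsL2' : ∀ s : ℕ, s ≤ M → (s:ℝ) ≤ L₂ := by
    intro s hs
    have h1 : s ≤ n₂ := le_trans hs (min_le_right _ _)
    calc (s:ℝ) ≤ (n₂:ℝ) := by exact_mod_cast h1
    _ ≤ L₂ := Nat.floor_le hL2pos.le
  have hred : ∑ s ∈ Finset.Icc 1 N, κ s = ∑ s ∈ Finset.Icc 1 M, κ s := by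
    apply (Finset.sum_subset (Finset.Icc_subset_Icc_right (min_le_left _ _)) ?_).symm
    intro s hs hs'
    simp only [Finset.mem_Icc] at hs hs'
    have h1 : 1 ≤ s := hs.1
    have h2 : n₂ < s := by omega
    have hsL2 : L₂ < s := (Nat.floor_lt hL2pos.le).mp h2
    rw [hκ s h1, if_neg (not_le.mpr (lt_of_le_of_lt hL12 hsL2)),
        if_neg (not_le.mpr hsL2)]
  rw [hred]
  rcases Nat.eq_zero_or_pos M with hM0 | hM1
  · rw [hM0]
    simp only [Finset.Icc_eq_empty_of_lt (by norm_num : (0:ℕ) < 1), Finset.sum_empty]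
    exact mul_nonneg hPpos.le (by linarith)
  have hIoc : Finset.Icc 1 M = Finset.Ioc 0 M := by
    rw [← Finset.Icc_add_one_left_eq_Ioc]; rfl
  by_cases hL : 1 ≤ L₁
  · -- main case
    set n₁ := Nat.floor L₁ with hn1def
    have hn1 : 1 ≤ n₁ := Nat.le_floor (by exact_mod_cast hL)
    have hn1L : (n₁:ℝ) + 1 ≤ L₁ + 1 := by
      have := Nat.floor_le hL1pos.le
      linarith
    have hLn1 : L₁ < (n₁:ℝ) + 1 := Nat.lt_floor_add_one L₁
    set A := min M (n₁ + 1) with hAdef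
    have hA1 : 1 ≤ A := le_min hM1 (by omega)
    have hAM : A ≤ M := min_le_left _ _
    rw [hIoc, ← Finset.sum_Ioc_consecutive κ (Nat.zero_le A) hAM]
    have hsqrtL1 : Real.sqrt L₁ = c / Δ := by
      rw [hL1, Real.sqrt_div (sq_nonneg c), Real.sqrt_sq hc.le, Real.sqrt_sq hΔ.le]
    have hsqL1 : 1 ≤ Real.sqrt L₁ := by
      rw [show (1:ℝ) = Real.sqrt 1 from (Real.sqrt_one).symm]
      exact Real.sqrt_le_sqrt hL
    -- bound on first chunk
    have hbound1 : ∑ s ∈ Finset.Ioc 0 A, κ s ≤ 2 * P := by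
      have hpt : ∀ s ∈ Finset.Ioc 0 A, κ s ≤ 2 * c * (Real.sqrt s)⁻¹ := by
        intro s hs
        simp only [Finset.mem_Ioc] at hs
        have hs1 : 1 ≤ s := hs.1
        have hs0 : (0:ℝ) < s := by exact_mod_cast hs.1
        have hsq0 : 0 < Real.sqrt s := Real.sqrt_pos.mpr hs0
        have hss : Real.sqrt s * Real.sqrt s = (s:ℝ) := Real.mul_self_sqrt hs0.le
        have hsle : (s:ℝ) ≤ L₂ := hsL2' s (le_trans hs.2 hAM)
        rw [hκ s hs1]
        split_ifs with h1
        · apply le_of_eq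
          rw [Real.sqrt_div (sq_nonneg c), Real.sqrt_sq hc.le, div_eq_mul_inv]
          ring
        · have hcd : c / Δ < Real.sqrt s := by
            rw [show c / Δ = Real.sqrt L₁ from hsqrtL1.symm]
            exact Real.sqrt_lt_sqrt hL1pos.le (not_le.mp h1)
          have hcd' : c ≤ Δ * Real.sqrt s := by
            rw [div_lt_iff₀ hΔ] at hcd
            nlinarith
          rw [← div_eq_mul_inv, div_le_div_iff₀ (by positivity) hsq0]
          have h5 : c * Real.sqrt s ≤ Δ * (s:ℝ) := by
            nlinarith [mul_le_mul_of_nonneg_right hcd' (Real.sqrt_nonneg (s:ℝ))]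
          nlinarith [mul_le_mul_of_nonneg_left h5 (by positivity : (0:ℝ) ≤ 2 * c)]
      calc ∑ s ∈ Finset.Ioc 0 A, κ s ≤ ∑ s ∈ Finset.Ioc 0 A, 2 * c * (Real.sqrt s)⁻¹ :=
            Finset.sum_le_sum hpt
        _ = 2 * c * ∑ s ∈ Finset.Icc 1 A, (Real.sqrt s)⁻¹ := by
            rw [← Finset.Icc_add_one_left_eq_Ioc, Finset.mul_sum]; rfl
        _ ≤ 2 * c * (2 * Real.sqrt A - 1) := by
            apply mul_le_mul_of_nonneg_left (sum_inv_sqrt_le A hA1) (by positivity)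
        _ ≤ 2 * P := by
            have hAL : (A:ℝ) ≤ L₁ + 1 := by
              calc (A:ℝ) ≤ ((n₁:ℕ) + 1 : ℕ) := by exact_mod_cast min_le_right M (n₁+1)
              _ = (n₁:ℝ) + 1 := by push_cast; ring
              _ ≤ L₁ + 1 := hn1L
            have h1 : Real.sqrt A ≤ Real.sqrt (L₁ + 1) :=
              Real.sqrt_le_sqrt hAL
            have hu : Real.sqrt L₁ ^ 2 = L₁ := Real.sq_sqrt hL1pos.le
            have hv : Real.sqrt (L₁+1) ^ 2 = L₁ + 1 := Real.sq_sqrt (by linarith)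
            have hv0 : 0 ≤ Real.sqrt (L₁+1) := Real.sqrt_nonneg _
            have h2 : 2 * Real.sqrt (L₁ + 1) - 1 ≤ 2 * Real.sqrt L₁ := by
              nlinarith [hsqL1]
            have h3 : 2 * Real.sqrt A - 1 ≤ 2 * (c / Δ) := by
              rw [← hsqrtL1]; linarith
            calc 2 * c * (2 * Real.sqrt A - 1) ≤ 2 * c * (2 * (c / Δ)) := by
                  apply mul_le_mul_of_nonneg_left h3 (by positivity)
              _ = 2 * P := by rw [hP]; field_simp
    have hbound2 : ∑ s ∈ Finset.Ioc A M, κ s ≤ P * (1 + Real.log K) := by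
      by_cases hcase : M ≤ n₁ + 1
      · have hAeq : A = M := min_eq_left hcase
        rw [hAeq]
        simp only [Finset.Ioc_self, Finset.sum_empty]
        exact mul_nonneg hPpos.le (by linarith)
      · have hAeq : A = n₁ + 1 := min_eq_right (by omega)
        have hpt : ∀ s ∈ Finset.Ioc A M, κ s = P * ((s:ℝ))⁻¹ := by
          intro s hs
          simp only [Finset.mem_Ioc] at hs
          have hs1 : 1 ≤ s := by omega
          have hsgtL1 : L₁ < (s:ℝ) := by
            have : (n₁:ℝ) + 1 < s := by
              have : A < s := hs.1
              rw [hAeq] at this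
              exact_mod_cast this
            linarith
          have hsle : (s:ℝ) ≤ L₂ := hsL2' s hs.2
          rw [hκ s hs1, if_neg (not_le.mpr hsgtL1), if_pos hsle, hP]
          have hs0 : (0:ℝ) < s := by exact_mod_cast hs1
          field_simp
          try ring
        rw [Finset.sum_congr rfl hpt, ← Finset.mul_sum]
        have hsum := sum_inv_le_log A hA1 M hAM
        have hlogA : Real.log L₁ ≤ Real.log A := by
          apply Real.log_le_log hL1pos
          rw [hAeq]
          push_cast
          linarith
        have hlogM : Real.log M ≤ Real.log L₂ := by
          apply Real.log_le_log (by exact_mod_cast hM1)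
          exact hsL2' M le_rfl
        have : ∑ s ∈ Finset.Ioc A M, ((s:ℝ))⁻¹ ≤ 1 + Real.log K := by
          calc ∑ s ∈ Finset.Ioc A M, ((s:ℝ))⁻¹ ≤ Real.log M - Real.log A := hsum
            _ ≤ Real.log L₂ - Real.log L₁ := by linarith
            _ = Real.log 2 + Real.log K := by rw [hlogL2]; ring
            _ ≤ 1 + Real.log K := by linarith
        exact mul_le_mul_of_nonneg_left this hPpos.le
    calc ∑ s ∈ Finset.Ioc 0 A, κ s + ∑ s ∈ Finset.Ioc A M, κ s
        ≤ 2 * P + P * (1 + Real.log K) := add_le_add hbound1 hbound2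
      _ = P * (3 + Real.log K) := by ring
  · -- L₁ < 1 case
    push_neg at hL
    have hpt : ∀ s ∈ Finset.Icc 1 M, κ s = P * ((s:ℝ))⁻¹ := by
      intro s hs
      simp only [Finset.mem_Icc] at hs
      have hs1 : (1:ℝ) ≤ s := by exact_mod_cast hs.1
      have hsle : (s:ℝ) ≤ L₂ := hsL2' s hs.2
      rw [hκ s hs.1, if_neg (not_le.mpr (lt_of_lt_of_le hL hs1)), if_pos hsle, hP]
      have hs0 : (0:ℝ) < s := by linarith
      field_simp
      try ring
    rw [Finset.sum_congr rfl hpt, ← Finset.mul_sum]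
    have hsum : ∑ s ∈ Finset.Icc 1 M, ((s:ℝ))⁻¹ ≤ 2 + Real.log K := by
      rw [hIoc, ← Finset.sum_Ioc_consecutive _ (Nat.zero_le 1) hM1]
      have h1 : ∑ s ∈ Finset.Ioc (0:ℕ) 1, ((s:ℝ))⁻¹ = 1 := by
        norm_num
      have h2 := sum_inv_le_log 1 le_rfl M hM1
      have hlogM : Real.log M ≤ Real.log L₂ := by
        apply Real.log_le_log (by exact_mod_cast hM1)
        exact hsL2' M le_rfl
      have hlogL1 : Real.log L₁ ≤ 0 := Real.log_nonpos hL1pos.le hL.le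
      rw [h1]
      simp only [Nat.cast_one, Real.log_one] at h2
      have : Real.log L₂ ≤ 1 + Real.log K := by rw [hlogL2]; linarith
      linarith
    calc P * ∑ s ∈ Finset.Icc 1 M, ((s:ℝ))⁻¹ ≤ P * (2 + Real.log K) :=
          mul_le_mul_of_nonneg_left hsum hPpos.le
      _ ≤ P * (3 + Real.log K) := by
          apply mul_le_mul_of_nonneg_left (by linarith) hPpos.le
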